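/- Suppose ρ is stationary for W, and let V, M : K → ℝ and a, b ∈ ℝ. Let ν : ℝ → (K → ℝ) be a family with ν_0 = ρ, each ν_h a probability distribution stationary for the rates W(x,y) e^{h(b V(y) − a V(x))}, and h ↦ ν_h(x) differentiable at 0 for each x; let κ : ℝ → (K → ℝ) be a family with κ_0 = ρ, each κ_h a probability distribution stationary for the rates W(x,y) e^{h(a M(y) − b M(x))}, and h ↦ κ_h(x) differentiable at 0 for each x. Then the derivative at h = 0 of h ↦ ∑_x ν_h(x)(L M)(x) equals the derivative at h = 0 of h ↦ ∑_x κ_h(x)(L V)(x); that is, the stationary response functions obey the reciprocity symmetry χ^{ab}_{MV} = χ^{ba}_{VM}. -/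

import Mathlib

/-- reciprocity symmetry `χ^{ab}_{MV} = χ^{ba}_{VM}`: with `ν h` the
stationary distributions for the rates perturbed by `V` with constants `(a, b)`, and
`κ h` those for the rates perturbed by `M` with constants `(b, a)` interchanged, the
derivative at `h = 0` of `h ↦ ∑ x, ν h x * (L M) x` equals the derivative at `h = 0`
of `h ↦ ∑ x, κ h x * (L V) x`. -/
theorem reciprocity_symmetry
    {K : Type*} [Fintype K] [Nonempty K]
    (W : K → K → ℝ) (hW : ∀ x y : K, x ≠ y → 0 ≤ W x y)
    (ρ : K → ℝ) (hρ0 : ∀ x, 0 ≤ ρ x) (hρ1 : ∑ x, ρ x = 1)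
    (hstat : ∀ f : K → ℝ, ∑ x, ρ x * (∑ y, W x y * (f y - f x)) = 0)
    (V M : K → ℝ) (a b : ℝ)
    (ν : ℝ → K → ℝ) (hν0 : ν 0 = ρ)
    (hνprob : ∀ h : ℝ, (∀ x, 0 ≤ ν h x) ∧ ∑ x, ν h x = 1)
    (hνstat : ∀ h : ℝ, ∀ f : K → ℝ,
      ∑ x, ν h x * (∑ y, (W x y * Real.exp (h * (b * V y - a * V x))) * (f y - f x)) = 0)
    (hνdiff : ∀ x, DifferentiableAt ℝ (fun h => ν h x) 0)
    (κ : ℝ → K → ℝ) (hκ0 : κ 0 = ρ)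
    (hκprob : ∀ h : ℝ, (∀ x, 0 ≤ κ h x) ∧ ∑ x, κ h x = 1)
    (hκstat : ∀ h : ℝ, ∀ f : K → ℝ,
      ∑ x, κ h x * (∑ y, (W x y * Real.exp (h * (a * M y - b * M x))) * (f y - f x)) = 0)
    (hκdiff : ∀ x, DifferentiableAt ℝ (fun h => κ h x) 0) :
    deriv (fun h => ∑ x, ν h x * (∑ y, W x y * (M y - M x))) 0 =
      deriv (fun h => ∑ x, κ h x * (∑ y, W x y * (V y - V x))) 0 := by
  classical
  -- derivative of the observable sums
  have hFd : HasDerivAt (fun h => ∑ x, ν h x * (∑ y, W x y * (M y - M x)))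
      (∑ x, (deriv (fun h => ν h x) 0) * (∑ y, W x y * (M y - M x))) 0 := by
    apply HasDerivAt.fun_sum
    intro x _
    exact ((hνdiff x).hasDerivAt).mul_const _
  have hGd : HasDerivAt (fun h => ∑ x, κ h x * (∑ y, W x y * (V y - V x)))
      (∑ x, (deriv (fun h => κ h x) 0) * (∑ y, W x y * (V y - V x))) 0 := by
    apply HasDerivAt.fun_sum
    intro x _
    exact ((hκdiff x).hasDerivAt).mul_const _
  rw [hFd.deriv, hGd.deriv]
  -- main lemma: differentiate a perturbed stationarity identity at 0
  have main : ∀ (μ : ℝ → K → ℝ) (c : K → K → ℝ) (f : K → ℝ),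
      μ 0 = ρ →
      (∀ x, DifferentiableAt ℝ (fun h => μ h x) 0) →
      (∀ h, ∑ x, μ h x * (∑ y, (W x y * Real.exp (h * c x y)) * (f y - f x)) = 0) →
      ∑ x, (deriv (fun h => μ h x) 0) * (∑ y, W x y * (f y - f x)) =
        - ∑ x, ρ x * (∑ y, W x y * c x y * (f y - f x)) := by
    intro μ c f hμ0 hdiff hst
    have hD : HasDerivAt
        (fun h => ∑ x, μ h x * (∑ y, (W x y * Real.exp (h * c x y)) * (f y - f x)))
        (∑ x, ((deriv (fun h => μ h x) 0) *
            (∑ y, (W x y * Real.exp ((0:ℝ) * c x y)) * (f y - f x))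
          + μ 0 x * (∑ y, W x y * c x y * (f y - f x)))) 0 := by
      apply HasDerivAt.fun_sum
      intro x _
      have h1 : HasDerivAt (fun h => μ h x) (deriv (fun h => μ h x) 0) 0 :=
        (hdiff x).hasDerivAt
      have h2 : HasDerivAt (fun h => ∑ y, (W x y * Real.exp (h * c x y)) * (f y - f x))
          (∑ y, W x y * c x y * (f y - f x)) 0 := by
        apply HasDerivAt.fun_sum
        intro y _
        have hin : HasDerivAt (fun h : ℝ => h * c x y) (c x y) 0 := by
          simpa using (hasDerivAt_id (0:ℝ)).mul_const (c x y)
        have hexp : HasDerivAt (fun h : ℝ => Real.exp (h * c x y)) (c x y) 0 := by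
          have := (Real.hasDerivAt_exp ((0:ℝ) * c x y)).comp 0 hin
          simpa [Function.comp_def] using this
        simpa [mul_assoc] using (hexp.const_mul (W x y)).mul_const (f y - f x)
      exact h1.mul h2
    have hzero : (fun h => ∑ x, μ h x * (∑ y, (W x y * Real.exp (h * c x y)) * (f y - f x)))
        = fun _ : ℝ => (0:ℝ) := funext hst
    rw [hzero] at hD
    have hkey := hD.unique (hasDerivAt_const 0 0)
    simp only [zero_mul, Real.exp_zero, mul_one, hμ0] at hkey
    rw [Finset.sum_add_distrib] at hkey
    linarith
  have hν := main ν (fun x y => b * V y - a * V x) M hν0 hνdiff (fun h => hνstat h M)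
  have hκ := main κ (fun x y => a * M y - b * M x) V hκ0 hκdiff (fun h => hκstat h V)
  rw [hν, hκ]
  have hst := hstat (fun x => V x * M x)
  have hdiff : ∑ x, ρ x * (∑ y, W x y * (b * V y - a * V x) * (M y - M x))
      - ∑ x, ρ x * (∑ y, W x y * (a * M y - b * M x) * (V y - V x))
      = (b - a) * ∑ x, ρ x * (∑ y, W x y * ((fun x => V x * M x) y - (fun x => V x * M x) x)) := by
    rw [Finset.mul_sum, ← Finset.sum_sub_distrib]
    apply Finset.sum_congr rfl
    intro x _
    simp only [Finset.mul_sum]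
    rw [← Finset.sum_sub_distrib]
    apply Finset.sum_congr rfl
    intro y _
    ring
  rw [hst, mul_zero] at hdiff
  linarith
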